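/- Let a > b > 0 with remainder sequence a_1 = a, a_2 = b, a_{i+2} = a_i mod a_{i+1}. If c is an integer such that a_{i+1} divides c - a_i (i.e., c ∈ 𝐜_i), and x, y are obtained by applying the backward recurrence F_{i} = (c - a_i)/a_{i+1}, F_{i-1} = 1 - F_i·q_{i-1}, F_{j} = F_{j+2} - q_j·F_{j+1}, then (x, y) = (F_2, F_1) satisfies a·x + b·y = c, where F_{i+1} := 1. -/

import Mathlib

/-- Remainder sequence of the Euclidean algorithm: `rem a b (i-1)` is `a_i`,
so `rem a b 0 = a₁ = a`, `rem a b 1 = a₂ = b`, and `a_{i+2} = a_i mod a_{i+1}`. -/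
def rem (a b : ℕ) : ℕ → ℕ
  | 0 => a
  | 1 => b
  | n + 2 => rem a b n % rem a b (n + 1)

theorem stmt_12 (a b : ℕ) (c : ℤ) (hab : b < a) (hb : 0 < b)
    (i : ℕ) (hi : 2 ≤ i)
    (hne : rem a b i ≠ 0)
    (hdvd : (rem a b i : ℤ) ∣ (c - (rem a b (i - 1) : ℤ)))
    (F : ℕ → ℤ)
    (hFi1 : F (i + 1) = 1)
    (hFi : F i = (c - (rem a b (i - 1) : ℤ)) / (rem a b i : ℤ))
    (hFim1 : F (i - 1) = 1 - F i * ((rem a b (i - 2) : ℤ) / (rem a b (i - 1) : ℤ)))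
    (hF : ∀ j, 1 ≤ j → j < i - 1 →
      F j = F (j + 2) - ((rem a b (j - 1) : ℤ) / (rem a b j : ℤ)) * F (j + 1)) :
    (a : ℤ) * F 2 + (b : ℤ) * F 1 = c := by
  obtain ⟨m, rfl⟩ : ∃ m, i = m + 2 := ⟨i - 2, by omega⟩
  set A : ℕ → ℤ := fun j => (rem a b j : ℤ) with hA
  -- the recurrence of the remainder sequence, in ℤ
  have hrec : ∀ t, A (t + 2) = A t - A (t + 1) * (A t / A (t + 1)) := by
    intro t
    have : rem a b (t + 2) = rem a b t % rem a b (t + 1) := rfl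
    simp only [hA, this]
    push_cast
    rw [Int.emod_def]
  set G : ℕ → ℤ := fun j => A (j - 1) * F (j + 1) + A j * F j with hG
  -- base case: G (m+1) = c
  have hbase : G (m + 1) = c := by
    have h1 : F (m + 1) = 1 - F (m + 2) * (A m / A (m + 1)) := by
      simpa using hFim1
    have h2 : A (m + 2) * F (m + 2) = c - A (m + 1) := by
      rw [hFi]
      exact Int.mul_ediv_cancel' (by simpa using hdvd)
    have : G (m + 1) = F (m + 2) * (A m - A (m + 1) * (A m / A (m + 1))) + A (m + 1) := by
      simp only [hG, Nat.add_sub_cancel, h1]; ring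
    rw [this, ← hrec m]
    linarith [h2]
  -- step: G j = G (j+1) for 1 ≤ j < m+1
  have hstep : ∀ t, t + 1 < m + 1 → G (t + 1) = G (t + 2) := by
    intro t ht
    have h1 : F (t + 1) = F (t + 3) - (A t / A (t + 1)) * F (t + 2) := by
      simpa using hF (t + 1) (by omega) (by omega)
    have : G (t + 1) = F (t + 2) * (A t - A (t + 1) * (A t / A (t + 1))) + A (t + 1) * F (t + 3) := by
      simp only [hG, Nat.add_sub_cancel, h1]; ring
    rw [this, ← hrec t]
    simp only [hG, show t + 2 - 1 = t + 1 from rfl]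
    ring
  -- downward induction
  have key : ∀ k, k ≤ m → G (m + 1 - k) = c := by
    intro k
    induction k with
    | zero => intro _; simpa using hbase
    | succ n ih =>
      intro hn
      have h1 : m + 1 - (n + 1) = (m - n - 1) + 1 := by omega
      have h2 : m + 1 - n = (m - n - 1) + 2 := by omega
      rw [h1, hstep (m - n - 1) (by omega), ← h2]
      exact ih (by omega)
  have hG1 : G 1 = c := by
    have := key m (le_refl m)
    simpa using this
  have ha : A 0 = (a : ℤ) := rfl
  have hb' : A 1 = (b : ℤ) := rfl
  simp only [hG, hA] at hG1
  simpa [rem] using hG1
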